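/- arXiv:1710.08701 — 3 statements merged into one kernel-verified Lean document; each statement's English description precedes it below -/
import Mathlib

section
/- Let t, Δ ≥ 1 be integers. Let G be a connected graph of maximum degree at most Δ with more than (t+2)·Δ vertices, and let v ∈ V(G). Then either G contains two disjoint vertex sets A, B, each of size at least Δ, with no edges between A and B, or G contains an induced path on t vertices with one endpoint v. -/
open Finset

def Anti {V : Type} (G : SimpleGraph V) (A B : Finset V) : Prop :=
  ∀ a ∈ A, ∀ b ∈ B, ¬ G.Adj a b

def FullAdj {V : Type} (G : SimpleGraph V) (A B : Finset V) : Prop :=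
  ∀ a ∈ A, ∀ b ∈ B, G.Adj a b

def ConnOn {V : Type} (G : SimpleGraph V) (A : Finset V) : Prop :=
  (G.induce (A : Set V)).Connected

def Nbr {V : Type} [Fintype V] [DecidableEq V] (G : SimpleGraph V) [DecidableRel G.Adj]
    (A : Finset V) : Finset V :=
  Finset.univ.filter (fun v => ∃ a ∈ A, G.Adj v a)

def IsIndPath {V : Type} (G : SimpleGraph V) {h : ℕ} (f : Fin h → V) : Prop :=
  Function.Injective f ∧
    ∀ i j : Fin h, G.Adj (f i) (f j) ↔ (i.val + 1 = j.val ∨ j.val + 1 = i.val)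

def colClass {V : Type} [Fintype V] [DecidableEq V] {ℓ : ℕ} (col : V → Fin ℓ) (i : Fin ℓ) :
    Finset V :=
  Finset.univ.filter (fun v => col v = i)

def IsBud {V : Type} [Fintype V] [DecidableEq V] (G : SimpleGraph V) [DecidableRel G.Adj]
    {ℓ : ℕ} (col : V → Fin ℓ) (α : ℝ) (B : Finset V) : Prop :=
  ConnOn G B ∧ ∃ j : Fin ℓ,
    α * ((colClass col j).card : ℝ) ≤ (((Nbr G B) ∩ colClass col j).card : ℝ)

set_option linter.unusedSectionVars false
set_option maxHeartbeats 1000000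

section WIn
open SimpleGraph
variable {V : Type} [DecidableEq V] (G : SimpleGraph V)

def WIn (S : Finset V) (a b : V) : Prop :=
  ∃ W : G.Walk a b, ∀ x ∈ W.support, x ∈ S

variable {G}

lemma WIn.mem_left {S : Finset V} {a b : V} (h : WIn G S a b) : a ∈ S := by
  obtain ⟨W, hW⟩ := h; exact hW a W.start_mem_support

lemma WIn.mem_right {S : Finset V} {a b : V} (h : WIn G S a b) : b ∈ S := by
  obtain ⟨W, hW⟩ := h; exact hW b W.end_mem_support

lemma WIn.refl {S : Finset V} {a : V} (ha : a ∈ S) : WIn G S a a :=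
  ⟨SimpleGraph.Walk.nil, by simp [ha]⟩

lemma WIn.symm {S : Finset V} {a b : V} (h : WIn G S a b) : WIn G S b a := by
  obtain ⟨W, hW⟩ := h
  exact ⟨W.reverse, by intro x hx; rw [SimpleGraph.Walk.support_reverse] at hx; exact hW x (List.mem_reverse.mp hx)⟩

lemma WIn.trans {S : Finset V} {a b c : V} (h1 : WIn G S a b) (h2 : WIn G S b c) : WIn G S a c := by
  obtain ⟨W1, hW1⟩ := h1; obtain ⟨W2, hW2⟩ := h2
  refine ⟨W1.append W2, fun x hx => ?_⟩
  rw [SimpleGraph.Walk.mem_support_append_iff] at hx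
  rcases hx with hx | hx
  · exact hW1 x hx
  · exact hW2 x hx

lemma WIn.mono {S T : Finset V} {a b : V} (hST : S ⊆ T) (h : WIn G S a b) : WIn G T a b := by
  obtain ⟨W, hW⟩ := h; exact ⟨W, fun x hx => hST (hW x hx)⟩

lemma WIn.adj {S : Finset V} {a b : V} (ha : a ∈ S) (hb : b ∈ S) (h : G.Adj a b) : WIn G S a b :=
  ⟨SimpleGraph.Walk.cons h SimpleGraph.Walk.nil, by
    intro x hx; simp [SimpleGraph.Walk.support_cons] at hx; rcases hx with rfl | rfl <;> assumption⟩

open Classical in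
noncomputable def gcmp (G : SimpleGraph V) (S : Finset V) (a : V) : Finset V :=
  S.filter (fun b => WIn G S a b)

lemma mem_cmp {S : Finset V} {a b : V} : b ∈ gcmp G S a ↔ b ∈ S ∧ WIn G S a b := by
  simp [gcmp]

lemma cmp_subset {S : Finset V} {a : V} : gcmp G S a ⊆ S := by
  intro x hx; exact (mem_cmp.mp hx).1

lemma self_mem_cmp {S : Finset V} {a : V} (ha : a ∈ S) : a ∈ gcmp G S a :=
  mem_cmp.mpr ⟨ha, WIn.refl ha⟩

lemma cmp_mono {S T : Finset V} {a : V} (h : S ⊆ T) : gcmp G S a ⊆ gcmp G T a := by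
  intro x hx; rw [mem_cmp] at hx ⊢; exact ⟨h hx.1, hx.2.mono h⟩

lemma cmp_anti {S : Finset V} {a x y : V} (hx : x ∈ gcmp G S a) (hy : y ∈ S)
    (hy' : y ∉ gcmp G S a) (hadj : G.Adj x y) : False := by
  rw [mem_cmp] at hx
  exact hy' (mem_cmp.mpr ⟨hy, hx.2.trans (WIn.adj hx.1 hy hadj)⟩)

lemma WIn_cmp {S : Finset V} {a b : V} (h : WIn G S a b) : WIn G (gcmp G S a) a b := by
  obtain ⟨W, hW⟩ := h
  refine ⟨W, fun x hx => mem_cmp.mpr ⟨hW x hx, ⟨W.takeUntil x hx, fun z hz => hW z (SimpleGraph.Walk.support_takeUntil_subset _ hx hz)⟩⟩⟩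

lemma cmp_closed_sub {S : Finset V} {a w : V} (hw : w ∈ gcmp G S a) : gcmp G S w ⊆ gcmp G S a := by
  intro b hb
  rw [mem_cmp] at hb hw ⊢
  exact ⟨hb.1, hw.2.trans hb.2⟩

lemma exists_boundary {C D' : Finset V} {x y : V} (W : G.Walk x y)
    (hW : ∀ z ∈ W.support, z ∈ C) (hx : x ∉ D') (hy : y ∈ D') :
    ∃ u w, u ∈ C ∧ u ∉ D' ∧ w ∈ D' ∧ G.Adj u w := by
  induction W with
  | nil => exact absurd hy hx
  | @cons a b c hab W ih =>
    by_cases hb : b ∈ D'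
    · exact ⟨a, b, hW a (SimpleGraph.Walk.start_mem_support _), hx, hb, hab⟩
    · exact ih (fun z hz => hW z (by rw [SimpleGraph.Walk.support_cons]; exact List.mem_cons_of_mem _ hz)) hb hy

end WIn

section Distribute
variable {V : Type} [DecidableEq V]

lemma distribute (G : SimpleGraph V) (Δ : ℕ) :
    ∀ n (T A₁ A₂ : Finset V), T.card ≤ n →
    (∀ x ∈ T, (gcmp G T x).card + 1 ≤ Δ) →
    (∀ a ∈ A₁ ∪ A₂, ∀ b ∈ T, ¬ G.Adj a b) →
    (∀ a ∈ A₁, ∀ b ∈ A₂, ¬ G.Adj a b) →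
    Disjoint A₁ A₂ → Disjoint (A₁ ∪ A₂) T →
    A₁.card + 1 ≤ Δ → A₂.card + 2 ≤ 2 * Δ →
    ∃ B₁ B₂ : Finset V, B₁ ∪ B₂ = A₁ ∪ A₂ ∪ T ∧ Disjoint B₁ B₂ ∧
      (∀ a ∈ B₁, ∀ b ∈ B₂, ¬ G.Adj a b) ∧
      ((Δ ≤ B₁.card ∧ Δ ≤ B₂.card) ∨ (B₁.card + 1 ≤ Δ ∧ B₂.card + 2 ≤ 2 * Δ)) := by
  intro n
  induction n with
  | zero =>
    intro T A₁ A₂ hTn _ _ h12 hd12 _ hA1 hA2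
    have hT : T = ∅ := Finset.card_eq_zero.mp (Nat.le_zero.mp hTn)
    subst hT
    exact ⟨A₁, A₂, by simp, hd12, h12, Or.inr ⟨hA1, hA2⟩⟩
  | succ m ih =>
    intro T A₁ A₂ hTn hcmp hAT h12 hd12 hdAT hA1 hA2
    rcases T.eq_empty_or_nonempty with hT | ⟨x, hx⟩
    · subst hT
      exact ⟨A₁, A₂, by simp, hd12, h12, Or.inr ⟨hA1, hA2⟩⟩
    · set p := gcmp G T x with hp
      have hpT : p ⊆ T := cmp_subset
      have hxp : x ∈ p := self_mem_cmp hx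
      have hpcard : p.card + 1 ≤ Δ := hcmp x hx
      set T' := T \ p with hT'
      have hT'T : T' ⊆ T := Finset.sdiff_subset
      have hT'card : T'.card ≤ m := by
        have h1 : T'.card + p.card = T.card := Finset.card_sdiff_add_card_eq_card hpT
        have h2 : 1 ≤ p.card := Finset.card_pos.mpr ⟨x, hxp⟩
        omega
      -- anti between p and T'
      have hpT' : ∀ a ∈ p, ∀ b ∈ T', ¬ G.Adj a b := by
        intro a ha b hb hadj
        have hbT : b ∈ T := hT'T hb
        have hbp : b ∉ p := (Finset.mem_sdiff.mp hb).2
        exact cmp_anti ha hbT hbp hadj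
      have hdisjApT : Disjoint (A₁ ∪ A₂) T := hdAT
      have hdA1p : Disjoint A₁ p := Finset.disjoint_left.mpr (fun {a} ha hap =>
        Finset.disjoint_left.mp hdAT (Finset.mem_union_left _ ha) (hpT hap))
      have hdA2p : Disjoint A₂ p := Finset.disjoint_left.mpr (fun {a} ha hap =>
        Finset.disjoint_left.mp hdAT (Finset.mem_union_right _ ha) (hpT hap))
      set X := A₁ ∪ p with hX
      have hXcard : X.card = A₁.card + p.card := Finset.card_union_of_disjoint hdA1p
      have hunion : A₁ ∪ p ∪ A₂ ∪ T' = A₁ ∪ A₂ ∪ T := by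
        have : p ∪ T' = T := Finset.union_sdiff_of_subset hpT
        rw [← this]
        ext y
        simp only [Finset.mem_union]
        tauto
      by_cases hbig : Δ ≤ X.card ∧ Δ ≤ A₂.card
      · -- stop: B₁ = X ∪ T', B₂ = A₂
        refine ⟨X ∪ T', A₂, ?_, ?_, ?_, Or.inl ⟨le_trans hbig.1 (Finset.card_le_card (Finset.subset_union_left)), hbig.2⟩⟩
        · rw [← hunion]; ext y; simp only [hX, hT', Finset.mem_union, Finset.mem_sdiff]; tauto
        · have d1 : Disjoint A₂ X := by
            rw [hX, Finset.disjoint_union_right]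
            exact ⟨hd12.symm, hdA2p⟩
          have d2 : Disjoint A₂ T' := Finset.disjoint_left.mpr (fun {a} ha hat =>
            Finset.disjoint_left.mp hdAT (Finset.mem_union_right _ ha) (hT'T hat))
          exact (Finset.disjoint_union_right.mpr ⟨d1, d2⟩).symm
        · intro a ha b hb
          rcases Finset.mem_union.mp ha with ha' | ha'
          · rcases Finset.mem_union.mp ha' with h | h
            · exact h12 a h b hb
            · intro hadj
              exact hAT b (Finset.mem_union_right _ hb) a (hpT h) hadj.symm
          · intro hadj
            exact hAT b (Finset.mem_union_right _ hb) a (hT'T ha') hadj.symm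
      · -- continue: recurse
        have hXanti : ∀ a ∈ X, ∀ b ∈ A₂, ¬ G.Adj a b := by
          intro a ha b hb
          rcases Finset.mem_union.mp ha with h | h
          · exact h12 a h b hb
          · intro hadj
            exact hAT b (Finset.mem_union_right _ hb) a (hpT h) hadj.symm
        have hdX2 : Disjoint X A₂ := by
          rw [hX, Finset.disjoint_union_left]
          exact ⟨hd12, hdA2p.symm⟩
        have hdXT' : Disjoint (X ∪ A₂) T' := by
          rw [Finset.disjoint_union_left, hX, Finset.disjoint_union_left]
          refine ⟨⟨?_, ?_⟩, ?_⟩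
          · exact Finset.disjoint_left.mpr (fun {a} ha hat =>
              Finset.disjoint_left.mp hdAT (Finset.mem_union_left _ ha) (hT'T hat))
          · exact Finset.disjoint_left.mpr (fun {a} ha hat => (Finset.mem_sdiff.mp hat).2 ha)
          · exact Finset.disjoint_left.mpr (fun {a} ha hat =>
              Finset.disjoint_left.mp hdAT (Finset.mem_union_right _ ha) (hT'T hat))
        have hcmp' : ∀ y ∈ T', (gcmp G T' y).card + 1 ≤ Δ := by
          intro y hy
          exact le_trans (Nat.add_le_add_right (Finset.card_le_card (cmp_mono hT'T)) 1) (hcmp y (hT'T hy))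
        have hXAT' : ∀ a ∈ X ∪ A₂, ∀ b ∈ T', ¬ G.Adj a b := by
          intro a ha b hb
          rcases Finset.mem_union.mp ha with h | h
          · rcases Finset.mem_union.mp h with h' | h'
            · exact hAT a (Finset.mem_union_left _ h') b (hT'T hb)
            · exact hpT' a h' b hb
          · exact hAT a (Finset.mem_union_right _ h) b (hT'T hb)
        have hXle : X.card + 2 ≤ 2 * Δ := by omega
        rcases Nat.lt_or_ge X.card Δ with hXsmall | hXge
        · -- recurse with (X, A₂)
          obtain ⟨B₁, B₂, hBu, hBd, hBa, hBs⟩ := ih T' X A₂ hT'card hcmp' hXAT' hXanti hdX2 hdXT' (by omega) hA2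
          refine ⟨B₁, B₂, ?_, hBd, hBa, hBs⟩
          rw [hBu, ← hunion]
        · -- X.card ≥ Δ, so A₂.card < Δ; recurse with (A₂, X)
          have hA2small : A₂.card + 1 ≤ Δ := by
            by_contra h
            exact hbig ⟨hXge, by omega⟩
          have hXAT'' : ∀ a ∈ A₂ ∪ X, ∀ b ∈ T', ¬ G.Adj a b := by
            intro a ha b hb
            rcases Finset.mem_union.mp ha with h | h
            · exact hXAT' a (Finset.mem_union_right _ h) b hb
            · exact hXAT' a (Finset.mem_union_left _ h) b hb
          have hdXT'' : Disjoint (A₂ ∪ X) T' := by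
            rw [Finset.disjoint_union_left] at hdXT' ⊢
            exact ⟨hdXT'.2, hdXT'.1⟩
          obtain ⟨B₁, B₂, hBu, hBd, hBa, hBs⟩ := ih T' A₂ X hT'card hcmp' hXAT''
            (fun a ha b hb hadj => hXanti b hb a ha hadj.symm) hdX2.symm hdXT'' hA2small hXle
          refine ⟨B₁, B₂, ?_, hBd, hBa, hBs⟩
          rw [hBu, ← hunion]
          ext y; simp only [hX, Finset.mem_union]; tauto
end Distribute

section Main
open SimpleGraph

lemma auxMain {V : Type} [Fintype V] [DecidableEq V] (G : SimpleGraph V) [DecidableRel G.Adj]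
    (t Δ : ℕ) (ht : 1 ≤ t) (hΔ : 1 ≤ Δ)
    (hdeg : ∀ w : V, G.degree w ≤ Δ)
    (hcard : (t + 2) * Δ < Fintype.card V) (v : V) :
    ∀ r k (hk : 1 ≤ k) (hkr : k + r = t) (f : Fin k → V) (lst : V) (C A₁ A₂ : Finset V)
      (hf : IsIndPath G f) (hf0 : f ⟨0, hk⟩ = v) (hlst : f ⟨k - 1, by omega⟩ = lst)
      (hnotC : ∀ i : Fin k, i.val + 1 < k → f i ∉ C)
      (hlstC : lst ∈ C)
      (hconnC : ∀ c ∈ C, WIn G C lst c)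
      (hantiPath : ∀ i : Fin k, i.val + 1 < k → ∀ c ∈ C, c ≠ lst → ¬ G.Adj (f i) c)
      (hantiAcc : ∀ a ∈ A₁ ∪ A₂, ∀ c ∈ C, c ≠ lst → ¬ G.Adj a c)
      (hanti12 : ∀ a ∈ A₁, ∀ b ∈ A₂, ¬ G.Adj a b)
      (hd12 : Disjoint A₁ A₂) (hdAC : Disjoint (A₁ ∪ A₂) C)
      (hA1 : A₁.card + 1 ≤ Δ) (hA2 : A₂.card + 2 ≤ 2 * Δ)
      (hcount : Fintype.card V ≤ (k - 1) * Δ + 1 + A₁.card + A₂.card + C.card),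
      (∃ A B : Finset V, Disjoint A B ∧ Δ ≤ A.card ∧ Δ ≤ B.card ∧ Anti G A B) ∨
      (∃ g : Fin t → V, IsIndPath G g ∧ g ⟨0, ht⟩ = v) := by
  intro r
  induction r with
  | zero =>
    intro k hk hkr f lst C A₁ A₂ hf hf0 _ _ _ _ _ _ _ _ _ _ _ _
    have hkt : k = t := by omega
    subst hkt
    exact Or.inr ⟨f, hf, hf0⟩
  | succ r ih =>
    intro k hk hkr f lst C A₁ A₂ hf hf0 hlst hnotC hlstC hconnC hantiPath hantiAcc hanti12 hd12 hdAC hA1 hA2 hcount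
    classical
    set S := C.filter (fun c => ¬ G.Adj lst c ∧ c ≠ lst) with hSdef
    have hSC : S ⊆ C := Finset.filter_subset _ _
    have hmemS : ∀ c, c ∈ S ↔ c ∈ C ∧ ¬ G.Adj lst c ∧ c ≠ lst := by
      intro c; simp [hSdef]
    have hlstS : lst ∉ S := fun h => ((hmemS lst).mp h).2.2 rfl
    have hCS : C \ S ⊆ insert lst (G.neighborFinset lst) := by
      intro c hc
      rw [Finset.mem_sdiff] at hc
      rw [Finset.mem_insert, SimpleGraph.mem_neighborFinset]
      by_cases h1 : c = lst
      · exact Or.inl h1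
      · by_cases h2 : G.Adj lst c
        · exact Or.inr h2
        · exact absurd ((hmemS c).mpr ⟨hc.1, h2, h1⟩) hc.2
    have hCScard : (C \ S).card ≤ Δ + 1 := by
      refine le_trans (Finset.card_le_card hCS) (le_trans (Finset.card_insert_le _ _) ?_)
      rw [SimpleGraph.card_neighborFinset_eq_degree]
      have := hdeg lst
      omega
    have hCcard : C.card = (C \ S).card + S.card := (Finset.card_sdiff_add_card_eq_card hSC).symm
    rcases S.eq_empty_or_nonempty with hSemp | hSne
    · -- stuck: counting contradiction
      exfalso
      have hCsmall : C.card ≤ Δ + 1 := by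
        have h0 : S.card = 0 := by rw [hSemp]; rfl
        omega
      have key : (k - 1) * Δ + 4 * Δ ≤ (t + 2) * Δ := by
        have h1 : (k - 1) + 4 ≤ t + 2 := by omega
        calc (k - 1) * Δ + 4 * Δ = ((k - 1) + 4) * Δ := by ring
          _ ≤ (t + 2) * Δ := Nat.mul_le_mul_right Δ h1
      linarith [hcount, hcard, hA1, hA2, hCsmall, key]
    · obtain ⟨dstar, hdstarS, hdmax⟩ := S.exists_max_image (fun d => (gcmp G S d).card) hSne
      set D := gcmp G S dstar with hDdef
      have hDS : D ⊆ S := cmp_subset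
      have hdstarD : dstar ∈ D := self_mem_cmp hdstarS
      have hDCsub : D ⊆ C := fun x hx => hSC (hDS hx)
      have hlstD : lst ∉ D := fun h => hlstS (hDS h)
      have hDnolast : ∀ c ∈ D, c ≠ lst := fun c hc h => hlstS (hDS (h ▸ hc))
      have hDnoadj : ∀ c ∈ D, ¬ G.Adj lst c := fun c hc => ((hmemS c).mp (hDS hc)).2.1
      -- find the bridge vertex u
      obtain ⟨W, hWsup⟩ : WIn G C lst dstar := hconnC dstar (hSC hdstarS)
      obtain ⟨u, w, huC, huD, hwD, huw⟩ := exists_boundary W hWsup hlstD hdstarD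
      have huS : u ∉ S := fun huS => cmp_anti hwD huS huD huw.symm
      have hulst : G.Adj lst u := by
        by_cases h : u = lst
        · exfalso
          subst h
          exact hDnoadj w hwD huw
        · by_cases hadj : G.Adj lst u
          · exact hadj
          · exact absurd ((hmemS u).mpr ⟨huC, hadj, h⟩) huS
      have hune : u ≠ lst := fun h => G.irrefl (h ▸ hulst)
      by_cases hstop : Δ ≤ D.card ∧ Δ ≤ (A₁ ∪ A₂ ∪ (S \ D)).card
      · -- anti-adjacent pair found
        left
        refine ⟨A₁ ∪ A₂ ∪ (S \ D), D, ?_, hstop.2, hstop.1, ?_⟩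
        · rw [Finset.disjoint_left]
          intro a ha haD
          rcases Finset.mem_union.mp ha with h | h
          · exact Finset.disjoint_left.mp hdAC h (hDCsub haD)
          · exact (Finset.mem_sdiff.mp h).2 haD
        · intro a ha b hb
          have hbC : b ∈ C := hDCsub hb
          have hbne : b ≠ lst := hDnolast b hb
          rcases Finset.mem_union.mp ha with h | h
          · exact hantiAcc a h b hbC hbne
          · intro hadj
            exact cmp_anti hb (Finset.mem_sdiff.mp h).1 (Finset.mem_sdiff.mp h).2 hadj.symm
      · -- redistribute the small components, then extend the path
        have hTbound : ∀ x ∈ S \ D, (gcmp G (S \ D) x).card + 1 ≤ Δ := by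
          intro x hxT
          rcases Nat.lt_or_ge D.card Δ with hD | hD
          · have h1 : (gcmp G (S \ D) x).card ≤ (gcmp G S x).card :=
              Finset.card_le_card (cmp_mono Finset.sdiff_subset)
            have h2 := hdmax x (Finset.mem_sdiff.mp hxT).1
            omega
          · have hrest : (A₁ ∪ A₂ ∪ (S \ D)).card < Δ := by
              by_contra h
              exact hstop ⟨hD, by omega⟩
            have h3 : (gcmp G (S \ D) x).card ≤ (A₁ ∪ A₂ ∪ (S \ D)).card :=
              Finset.card_le_card (le_trans cmp_subset Finset.subset_union_right)
            omega
        have hAT : ∀ a ∈ A₁ ∪ A₂, ∀ b ∈ S \ D, ¬ G.Adj a b := by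
          intro a ha b hb
          have hbS := (Finset.mem_sdiff.mp hb).1
          exact hantiAcc a ha b (hSC hbS) (((hmemS b).mp hbS).2.2)
        have hdAT : Disjoint (A₁ ∪ A₂) (S \ D) := Finset.disjoint_left.mpr
          (fun {a} ha hat => Finset.disjoint_left.mp hdAC ha (hSC (Finset.mem_sdiff.mp hat).1))
        obtain ⟨B₁, B₂, hBu, hBd, hBa, hBs⟩ := distribute G Δ (S \ D).card (S \ D) A₁ A₂
          le_rfl hTbound hAT hanti12 hd12 hdAT hA1 hA2
        rcases hBs with hbig | hsmall
        · exact Or.inl ⟨B₁, B₂, hBd, hbig.1, hbig.2, hBa⟩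
        · -- extend the path by u
          have huR : ∀ i : Fin k, f i ≠ u := by
            intro i h
            by_cases hik : i.val + 1 < k
            · exact hnotC i hik (h ▸ huC)
            · have hieq : i = ⟨k - 1, by omega⟩ := Fin.ext (show i.val = k - 1 by omega)
              rw [hieq, hlst] at h
              exact hune h.symm
          set C' := insert u D with hC'def
          set f' : Fin (k + 1) → V := Fin.snoc f u with hf'def
          have hval : ∀ (i : Fin (k + 1)) (h : i.val < k), f' i = f ⟨i.val, h⟩ := by
            intro i h
            conv_lhs => rw [show i = Fin.castSucc ⟨i.val, h⟩ from Fin.ext rfl]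
            exact @Fin.snoc_castSucc k (fun _ => V) u f ⟨i.val, h⟩
          have hlastval : ∀ (i : Fin (k + 1)) (h : i.val = k), f' i = u := by
            intro i h
            conv_lhs => rw [show i = Fin.last k from Fin.ext (by simpa using h)]
            simp [hf'def]
          have hadjU : ∀ (m : ℕ) (hm : m < k), G.Adj (f ⟨m, hm⟩) u ↔ m + 1 = k := by
            intro m hm
            constructor
            · intro h
              by_contra hne
              have hik : m + 1 < k := by omega
              exact hantiPath ⟨m, hm⟩ hik u huC hune h
            · intro h
              have hieq : (⟨m, hm⟩ : Fin k) = ⟨k - 1, by omega⟩ :=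
                Fin.ext (show m = k - 1 by omega)
              rw [hieq, hlst]
              exact hulst
          have hf' : IsIndPath G f' := by
            constructor
            · intro i j hij
              rcases Nat.lt_or_ge i.val k with hi | hi <;> rcases Nat.lt_or_ge j.val k with hj | hj
              · rw [hval i hi, hval j hj] at hij
                have h2 := hf.1 hij
                rw [Fin.mk.injEq] at h2
                exact Fin.ext h2
              · rw [hval i hi, hlastval j (by have := j.isLt; omega)] at hij
                exact absurd hij (huR _)
              · rw [hlastval i (by have := i.isLt; omega), hval j hj] at hij
                exact absurd hij.symm (huR _)
              · exact Fin.ext (by have := i.isLt; have := j.isLt; omega)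
            · intro i j
              rcases Nat.lt_or_ge i.val k with hi | hi <;> rcases Nat.lt_or_ge j.val k with hj | hj
              · rw [hval i hi, hval j hj]
                exact hf.2 ⟨i.val, hi⟩ ⟨j.val, hj⟩
              · have hj' : j.val = k := by have := j.isLt; omega
                rw [hval i hi, hlastval j hj', hadjU i.val hi]
                omega
              · have hi' : i.val = k := by have := i.isLt; omega
                rw [hlastval i hi', hval j hj, G.adj_comm, hadjU j.val hj]
                omega
              · have hi' : i.val = k := by have := i.isLt; omega
                have hj' : j.val = k := by have := j.isLt; omega
                rw [hlastval i hi', hlastval j hj']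
                constructor
                · intro h
                  exact absurd h (G.irrefl)
                · intro h
                  exfalso
                  rcases h with h | h <;> omega
          have hf0' : f' ⟨0, by omega⟩ = v := by
            rw [hval ⟨0, by omega⟩ (show 0 < k by omega)]
            exact hf0
          have hlst' : f' ⟨(k + 1) - 1, by omega⟩ = u := hlastval _ (by simp)
          have hnotC' : ∀ i : Fin (k + 1), i.val + 1 < k + 1 → f' i ∉ C' := by
            intro i hik hmem
            have hi : i.val < k := by omega
            rw [hval i hi] at hmem
            rcases Finset.mem_insert.mp hmem with h | h
            · exact huR _ h
            · by_cases h2 : i.val + 1 < k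
              · exact hnotC ⟨i.val, hi⟩ h2 (hDCsub h)
              · have hieq : (⟨i.val, hi⟩ : Fin k) = ⟨k - 1, by omega⟩ :=
                  Fin.ext (show i.val = k - 1 by omega)
                rw [hieq, hlst] at h
                exact hlstD h
          have hlstC' : u ∈ C' := Finset.mem_insert_self u D
          have hconnC' : ∀ c ∈ C', WIn G C' u c := by
            intro c hc
            rcases Finset.mem_insert.mp hc with rfl | hcD
            · exact WIn.refl hlstC'
            · have h1 : WIn G S w c := ((mem_cmp.mp hwD).2.symm).trans (mem_cmp.mp hcD).2
              have h2 : WIn G D w c := (WIn_cmp h1).mono (cmp_closed_sub hwD)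
              exact (WIn.adj hlstC' (Finset.mem_insert_of_mem hwD) huw).trans
                (h2.mono (Finset.subset_insert u D))
          have hantiPath' : ∀ i : Fin (k + 1), i.val + 1 < k + 1 → ∀ c ∈ C', c ≠ u →
              ¬ G.Adj (f' i) c := by
            intro i hik c hc hcu
            have hi : i.val < k := by omega
            rw [hval i hi]
            have hcD : c ∈ D := (Finset.mem_insert.mp hc).resolve_left hcu
            by_cases h2 : i.val + 1 < k
            · exact hantiPath ⟨i.val, hi⟩ h2 c (hDCsub hcD) (hDnolast c hcD)
            · have hieq : (⟨i.val, hi⟩ : Fin k) = ⟨k - 1, by omega⟩ :=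
                Fin.ext (show i.val = k - 1 by omega)
              rw [hieq, hlst]
              exact hDnoadj c hcD
          have hantiAcc' : ∀ a ∈ B₁ ∪ B₂, ∀ c ∈ C', c ≠ u → ¬ G.Adj a c := by
            intro a ha c hc hcu
            have hcD : c ∈ D := (Finset.mem_insert.mp hc).resolve_left hcu
            rw [hBu] at ha
            rcases Finset.mem_union.mp ha with h | h
            · exact hantiAcc a h c (hDCsub hcD) (hDnolast c hcD)
            · intro hadj
              exact cmp_anti hcD (Finset.mem_sdiff.mp h).1 (Finset.mem_sdiff.mp h).2 hadj.symm
          have hdAC' : Disjoint (B₁ ∪ B₂) C' := by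
            rw [hBu, Finset.disjoint_left]
            intro a ha haC'
            rcases Finset.mem_insert.mp haC' with rfl | haD
            · rcases Finset.mem_union.mp ha with h | h
              · exact Finset.disjoint_left.mp hdAC h huC
              · exact huS (Finset.mem_sdiff.mp h).1
            · rcases Finset.mem_union.mp ha with h | h
              · exact Finset.disjoint_left.mp hdAC h (hDCsub haD)
              · exact (Finset.mem_sdiff.mp h).2 haD
          have hBcard : B₁.card + B₂.card = A₁.card + A₂.card + (S \ D).card := by
            have h1 : (B₁ ∪ B₂).card = B₁.card + B₂.card := Finset.card_union_of_disjoint hBd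
            have h2 : (A₁ ∪ A₂ ∪ (S \ D)).card = A₁.card + A₂.card + (S \ D).card := by
              rw [Finset.card_union_of_disjoint hdAT, Finset.card_union_of_disjoint hd12]
            rw [hBu, h2] at h1
            omega
          have hC'card : C'.card = D.card + 1 := Finset.card_insert_of_notMem huD
          have hSsplit : S.card = (S \ D).card + D.card :=
            (Finset.card_sdiff_add_card_eq_card hDS).symm
          have hkΔ : (k - 1) * Δ + Δ = k * Δ := by
            have h1 : (k - 1) + 1 = k := by omega
            calc (k - 1) * Δ + Δ = ((k - 1) + 1) * Δ := by ring
              _ = k * Δ := by rw [h1]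
          have hcount' : Fintype.card V ≤ ((k + 1) - 1) * Δ + 1 + B₁.card + B₂.card + C'.card := by
            rw [Nat.add_sub_cancel]
            linarith [hcount, hCScard, hCcard, hSsplit, hBcard, hC'card, hkΔ]
          exact ih (k + 1) (by omega) (by omega) f' u C' B₁ B₂ hf' hf0' hlst' hnotC' hlstC'
            hconnC' hantiPath' hantiAcc' hBa hBd hdAC' hsmall.1 hsmall.2 hcount'
end Main


/-- path-growing lemma, Bousquet–Lagoutte–Thomassé:
for integers `t, Δ ≥ 1`, every connected graph `G` of maximum degree at most `Δ`
on more than `(t+2)·Δ` vertices and every vertex `v` either contains a pair of disjoint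
anti-adjacent vertex sets of size at least `Δ` each, or an induced path on `t` vertices
with one endpoint `v`. -/
theorem stmt0 {V : Type} [Fintype V] [DecidableEq V] (G : SimpleGraph V) [DecidableRel G.Adj]
    (t Δ : ℕ) (ht : 1 ≤ t) (hΔ : 1 ≤ Δ)
    (hconn : G.Connected) (hdeg : ∀ w : V, G.degree w ≤ Δ)
    (hcard : (t + 2) * Δ < Fintype.card V) (v : V) :
    (∃ A B : Finset V, Disjoint A B ∧ Δ ≤ A.card ∧ Δ ≤ B.card ∧ Anti G A B) ∨
    (∃ f : Fin t → V, IsIndPath G f ∧ f ⟨0, ht⟩ = v) := by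
  have hpath : IsIndPath G (fun _ : Fin 1 => v) := by
    constructor
    · intro a b _
      exact Subsingleton.elim a b
    · intro i j
      have hi : i.val = 0 := by omega
      have hj : j.val = 0 := by omega
      constructor
      · intro h
        exact absurd h (G.irrefl)
      · intro h
        exfalso
        rcases h with h | h <;> omega
  refine auxMain G t Δ ht hΔ hdeg hcard v (t - 1) 1 le_rfl (by omega)
    (fun _ => v) v Finset.univ ∅ ∅ hpath rfl rfl ?_ (Finset.mem_univ v) ?_ ?_ ?_ ?_ ?_ ?_ ?_ ?_ ?_
  · intro i hik
    omega
  · intro c _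
    obtain ⟨W⟩ := hconn.preconnected v c
    exact ⟨W, fun x _ => Finset.mem_univ x⟩
  · intro i hik
    omega
  · intro a ha
    simp at ha
  · intro a ha
    simp at ha
  · simp
  · simp
  · simp [hΔ]
  · have : (∅ : Finset V).card = 0 := rfl
    omega
  · simp
end

section
/- Let G be a graph and Δ ≥ 1 an integer such that G contains no two disjoint anti-adjacent vertex sets each of size at least Δ. Then for every subset C ⊆ V(G) with |C| ≥ 3Δ, the largest connected component of the induced subgraph G[C] has more than |C| − Δ vertices. -/
open Finset

section Aux
variable {V : Type} [Fintype V] [DecidableEq V] (G : SimpleGraph V) (C : Finset V)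

def ClosedIn (A : Finset V) : Prop :=
  A ⊆ C ∧ ∀ a ∈ A, ∀ b ∈ C, b ∉ A → ¬ G.Adj a b

open Classical in
noncomputable def compOf (v : V) : Finset V :=
  C.filter (fun u => ∃ (hv : v ∈ C) (hu : u ∈ C),
    (G.induce (C : Set V)).Reachable ⟨v, hv⟩ ⟨u, hu⟩)

variable {G C}

lemma mem_compOf_self {v : V} (hv : v ∈ C) : v ∈ compOf G C v := by
  classical
  simp only [compOf, mem_filter]
  exact ⟨hv, hv, hv, SimpleGraph.Reachable.refl _⟩

lemma compOf_subset (v : V) : compOf G C v ⊆ C := by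
  classical
  exact Finset.filter_subset _ _

lemma mem_compOf_iff {v u : V} (hv : v ∈ C) :
    u ∈ compOf G C v ↔ ∃ hu : u ∈ C,
      (G.induce (C : Set V)).Reachable ⟨v, hv⟩ ⟨u, hu⟩ := by
  classical
  simp only [compOf, mem_filter]
  constructor
  · rintro ⟨hu, _, hu', hr⟩; exact ⟨hu, hr⟩
  · rintro ⟨hu, hr⟩; exact ⟨hu, hv, hu, hr⟩

lemma walk_stays {A : Finset V} (hA : ClosedIn G C A) :
    ∀ {a b : (C : Set V)}, (G.induce (C : Set V)).Walk a b → a.val ∈ A → b.val ∈ A := by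
  intro a b w
  induction w with
  | nil => exact id
  | @cons x y z hadj p ih =>
      intro hx
      apply ih
      by_contra hy
      exact hA.2 x.val hx y.val y.2 hy hadj

lemma closed_compOf {v : V} (hv : v ∈ C) : ClosedIn G C (compOf G C v) := by
  refine ⟨compOf_subset v, ?_⟩
  intro a ha b hb hbn hadj
  rw [mem_compOf_iff hv] at ha
  obtain ⟨haC, hr⟩ := ha
  apply hbn
  rw [mem_compOf_iff hv]
  have hadj' : (G.induce (C : Set V)).Adj ⟨a, haC⟩ ⟨b, hb⟩ := hadj
  exact ⟨hb, hr.trans hadj'.reachable⟩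

lemma conn_compOf {v : V} (hv : v ∈ C) : ConnOn G (compOf G C v) := by
  set D := compOf G C v with hD
  have key : ∀ (a b : (C : Set V)), (G.induce (C : Set V)).Walk a b → ∀ ha : a.val ∈ D,
      ∃ hb : b.val ∈ D, (G.induce (D : Set V)).Reachable
        ⟨a.val, by exact_mod_cast ha⟩ ⟨b.val, by exact_mod_cast hb⟩ := by
    intro a b w
    induction w with
    | nil => intro ha; exact ⟨ha, SimpleGraph.Reachable.refl _⟩
    | @cons x y z hadj p ih =>
        intro hx
        have hxr : ∃ hxC : x.val ∈ C,
            (G.induce (C : Set V)).Reachable ⟨v, hv⟩ ⟨x.val, hxC⟩ :=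
          (mem_compOf_iff hv).mp hx
        obtain ⟨hxC, hrx⟩ := hxr
        have hy : y.val ∈ D := by
          rw [hD, mem_compOf_iff hv]
          have hadj' : (G.induce (C : Set V)).Adj ⟨x.val, hxC⟩ y := by
            exact_mod_cast hadj
          exact ⟨y.2, hrx.trans hadj'.reachable⟩
        obtain ⟨hz, hr⟩ := ih hy
        refine ⟨hz, ?_⟩
        have hadjD : (G.induce (D : Set V)).Adj ⟨x.val, by exact_mod_cast hx⟩
            ⟨y.val, by exact_mod_cast hy⟩ := hadj
        exact hadjD.reachable.trans hr
  have hvD : v ∈ D := mem_compOf_self hv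
  show (G.induce (D : Set V)).Connected
  rw [SimpleGraph.connected_iff]
  constructor
  · rintro ⟨x, hx⟩ ⟨y, hy⟩
    have hx' : x ∈ D := by exact_mod_cast hx
    have hy' : y ∈ D := by exact_mod_cast hy
    obtain ⟨hxC, hrx⟩ := (mem_compOf_iff hv).mp hx'
    obtain ⟨hyC, hry⟩ := (mem_compOf_iff hv).mp hy'
    obtain ⟨wx⟩ := hrx
    obtain ⟨wy⟩ := hry
    obtain ⟨_, rx⟩ := key _ _ wx hvD
    obtain ⟨_, ry⟩ := key _ _ wy hvD
    exact (rx.symm.trans ry : (G.induce (D : Set V)).Reachable ⟨x, hx⟩ ⟨y, hy⟩)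
  · exact ⟨⟨v, by exact_mod_cast hvD⟩⟩

lemma closed_union {A B : Finset V} (hA : ClosedIn G C A) (hB : ClosedIn G C B) :
    ClosedIn G C (A ∪ B) := by
  refine ⟨union_subset hA.1 hB.1, ?_⟩
  intro a ha b hb hbn hadj
  rcases mem_union.mp ha with h | h
  · exact hA.2 a h b hb (fun hbA => hbn (mem_union_left _ hbA)) hadj
  · exact hB.2 a h b hb (fun hbB => hbn (mem_union_right _ hbB)) hadj

lemma anti_of_closed {A : Finset V} (hA : ClosedIn G C A) : Anti G A (C \ A) := by
  intro a ha b hb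
  rw [mem_sdiff] at hb
  exact hA.2 a ha b hb.1 hb.2

lemma disjoint_compOf {A : Finset V} (hA : ClosedIn G C A) {v : V} (hv : v ∈ C)
    (hvA : v ∉ A) : Disjoint A (compOf G C v) := by
  rw [Finset.disjoint_left]
  intro u huA huD
  obtain ⟨huC, hr⟩ := (mem_compOf_iff hv).mp huD
  obtain ⟨w⟩ := hr.symm
  exact hvA (walk_stays hA w huA)

end Aux

/-- if a graph `G` has no two disjoint anti-adjacent vertex sets of size
at least `Δ` each, then for every `C ⊆ V(G)` with `|C| ≥ 3Δ` the largest connected component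
of `G[C]` has more than `|C| − Δ` vertices, i.e. there is a connected subset `D ⊆ C`
with `|D| > |C| − Δ`. -/
theorem stmt1 {V : Type} [Fintype V] [DecidableEq V] (G : SimpleGraph V)
    (Δ : ℕ) (hΔ : 1 ≤ Δ)
    (hno : ¬ ∃ A B : Finset V, Disjoint A B ∧ Δ ≤ A.card ∧ Δ ≤ B.card ∧ Anti G A B)
    (C : Finset V) (hC : 3 * Δ ≤ C.card) :
    ∃ D : Finset V, D ⊆ C ∧ ConnOn G D ∧ C.card - Δ < D.card := by
    classical
  by_contra hcon
  push_neg at hcon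
  have hcon' : ∀ D : Finset V, D ⊆ C → ConnOn G D → D.card ≤ C.card - Δ := by
    intro D h1 h2
    exact Nat.le_of_not_lt fun hlt => absurd hlt (not_lt.mpr (hcon D h1 h2))
  have hΔC : Δ ≤ C.card := le_trans (by omega) hC
  -- every component has card ≤ C.card - Δ
  have hcomp_le : ∀ v ∈ C, (compOf G C v).card ≤ C.card - Δ := fun v hv =>
    hcon' _ (compOf_subset v) (conn_compOf hv)
  -- the generic contradiction step from a closed set of medium size
  have key : ∀ A : Finset V, ClosedIn G C A → Δ ≤ A.card → A.card + Δ ≤ C.card → False := by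
    intro A hA h1 h2
    apply hno
    refine ⟨A, C \ A, disjoint_sdiff, h1, ?_, anti_of_closed hA⟩
    have := Finset.card_sdiff_of_subset hA.1
    have hle := Finset.card_le_card hA.1
    omega
  by_cases hbig : ∃ v ∈ C, Δ ≤ (compOf G C v).card
  · obtain ⟨v, hv, hDv⟩ := hbig
    have h2 : (compOf G C v).card + Δ ≤ C.card := by
      have := hcomp_le v hv
      omega
    exact key _ (closed_compOf hv) hDv h2
  · push_neg at hbig
    -- all components are small; glue them greedily
    set S : Finset (Finset V) :=
      C.powerset.filter (fun A => ClosedIn G C A ∧ A.card < Δ) with hS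
    have hemp : (∅ : Finset V) ∈ S := by
      rw [hS, mem_filter, mem_powerset]
      refine ⟨empty_subset _, ⟨empty_subset _, ?_⟩, by simp; omega⟩
      intro a ha; exact absurd ha (notMem_empty a)
    obtain ⟨A, hAS, hAmax⟩ := S.exists_max_image Finset.card ⟨∅, hemp⟩
    rw [hS, mem_filter, mem_powerset] at hAS
    obtain ⟨hAC, hAcl, hAlt⟩ := hAS
    have hAne : A ≠ C := by
      intro h; rw [h] at hAlt; omega
    obtain ⟨v, hvC, hvA⟩ := Finset.exists_of_ssubset (lt_of_le_of_ne hAC hAne)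
    have hdisj := disjoint_compOf hAcl hvC hvA
    set J := A ∪ compOf G C v with hJ
    have hJcl : ClosedIn G C J := closed_union hAcl (closed_compOf hvC)
    have hJcard : J.card = A.card + (compOf G C v).card :=
      Finset.card_union_of_disjoint hdisj
    have hvD : v ∈ compOf G C v := mem_compOf_self hvC
    have hDpos : 1 ≤ (compOf G C v).card := Finset.card_pos.mpr ⟨v, hvD⟩
    have hJbig : Δ ≤ J.card := by
      by_contra hJlt
      push_neg at hJlt
      have hJS : J ∈ S := by
        rw [hS, mem_filter, mem_powerset]
        exact ⟨hJcl.1, hJcl, hJlt⟩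
      have := hAmax J hJS
      omega
    have hDsmall := hbig v hvC
    exact key J hJcl hJbig (by omega)
end

section
/- Let ℓ, h ≥ 1 and d ≥ 0 be integers and α > 0 a constant. If an ℓ-coloured graph G contains an (α, d+1)-fern of height at least h, then G contains an (α, h, d)-junior caterpillar. -/
open Finset

/-- A rooted tree on node type `ι`, given by its root and parent function. -/
structure RootedTreeOn (ι : Type) where
  root : ι
  parent : ι → ι
  parent_root : parent root = root
  reach : ∀ v : ι, ∃ k : ℕ, parent^[k] v = root

/-- The children of a node. -/
def RootedTreeOn.children {ι : Type} [Fintype ι] [DecidableEq ι] (T : RootedTreeOn ι)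
    (t : ι) : Finset ι :=
  Finset.univ.filter (fun c => c ≠ T.root ∧ T.parent c = t)

/-- The depth of a node: its distance to the root. -/
def RootedTreeOn.depth {ι : Type} [DecidableEq ι] (T : RootedTreeOn ι) (v : ι) : ℕ :=
  Nat.find (T.reach v)

/-- The height of a rooted tree: the maximum depth of a node. -/
def RootedTreeOn.height {ι : Type} [Fintype ι] [DecidableEq ι] (T : RootedTreeOn ι) : ℕ :=
  Finset.univ.sup (fun v => T.depth v)

/-- An `(α, d')`-fern in the `ℓ`-coloured graph `G`: a rooted tree `T` in which every
internal node has exactly `d'` children, together with a colour-compatible family `B` of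
`α`-buds, one per node, pairwise anti-adjacent except that every vertex of a parent bud
has a neighbour in each child bud. -/
def IsFern {V ι : Type} [Fintype V] [DecidableEq V] [Fintype ι] [DecidableEq ι]
    (G : SimpleGraph V) [DecidableRel G.Adj] {ℓ : ℕ} (col : V → Fin ℓ) (α : ℝ)
    (d' : ℕ) (T : RootedTreeOn ι) (B : ι → Finset V) : Prop :=
  (∀ t : ι, (T.children t).Nonempty → (T.children t).card = d') ∧
  (∀ t : ι, IsBud G col α (B t)) ∧
  (∃ c : ι → Fin ℓ, Function.Injective c ∧ ∀ t : ι, B t ⊆ colClass col (c t)) ∧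
  (∀ s t : ι, s ≠ t → T.parent t ≠ s → T.parent s ≠ t → Anti G (B s) (B t)) ∧
  (∀ t : ι, t ≠ T.root → ∀ v ∈ B (T.parent t), ∃ w ∈ B t, G.Adj v w)

/-- An `(α, h, d)`-junior caterpillar in the `ℓ`-coloured graph `G`: an induced path
`P` on `h` vertices together with a colour-compatible (jointly with the path vertices)
family of pairwise anti-adjacent `α`-buds `B i j` with `N(B i j) ∩ V(P) = {P i}`. -/
def IsJuniorCat {V : Type} [Fintype V] [DecidableEq V] (G : SimpleGraph V)
    [DecidableRel G.Adj] {ℓ : ℕ} (col : V → Fin ℓ) (α : ℝ) (h d : ℕ)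
    (P : Fin h → V) (B : Fin h → Fin d → Finset V) : Prop :=
  IsIndPath G P ∧
  (∀ (i : Fin h) (j : Fin d), IsBud G col α (B i j)) ∧
  (∀ p q : Fin h × Fin d, p ≠ q → Anti G (B p.1 p.2) (B q.1 q.2)) ∧
  (∃ c : (Fin h ⊕ Fin h × Fin d) → Fin ℓ, Function.Injective c ∧
    (∀ i : Fin h, P i ∈ colClass col (c (Sum.inl i))) ∧
    (∀ (i : Fin h) (j : Fin d), B i j ⊆ colClass col (c (Sum.inr (i, j))))) ∧
  (∀ (i : Fin h) (j : Fin d),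
    Nbr G (B i j) ∩ Finset.image P Finset.univ = {P i})

namespace RootedTreeOn

variable {ι : Type} [DecidableEq ι] (T : RootedTreeOn ι)

lemma iterate_depth (v : ι) : T.parent^[T.depth v] v = T.root :=
  Nat.find_spec (T.reach v)

lemma depth_le (v : ι) {k : ℕ} (hk : T.parent^[k] v = T.root) : T.depth v ≤ k :=
  Nat.find_le hk

lemma depth_iterate (v : ι) {j : ℕ} (hj : j ≤ T.depth v) :
    T.depth (T.parent^[j] v) = T.depth v - j := by
  apply le_antisymm
  · apply T.depth_le
    rw [← Function.iterate_add_apply, show T.depth v - j + j = T.depth v by omega]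
    exact T.iterate_depth v
  · by_contra hlt
    push_neg at hlt
    have h2 := T.iterate_depth (T.parent^[j] v)
    rw [← Function.iterate_add_apply] at h2
    have := T.depth_le v h2
    omega

lemma depth_eq_zero_iff (v : ι) : T.depth v = 0 ↔ v = T.root := by
  rw [RootedTreeOn.depth, Nat.find_eq_zero]
  simp

lemma depth_parent (v : ι) (hv : v ≠ T.root) :
    T.depth (T.parent v) = T.depth v - 1 := by
  have h0 : T.depth v ≠ 0 := fun hz => hv ((T.depth_eq_zero_iff v).mp hz)
  have := T.depth_iterate v (j := 1) (by omega)
  simpa using this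

end RootedTreeOn

/-- if an `ℓ`-coloured graph contains an `(α, d+1)`-fern of height at
least `h`, then it contains an `(α, h, d)`-junior caterpillar. -/
theorem stmt4 {V ι : Type} [Fintype V] [DecidableEq V] [Fintype ι] [DecidableEq ι]
    (G : SimpleGraph V) [DecidableRel G.Adj] {ℓ : ℕ} (col : V → Fin ℓ)
    (α : ℝ) (hα : 0 < α) (h d : ℕ) (hh : 1 ≤ h) (hℓ : 1 ≤ ℓ)
    (T : RootedTreeOn ι) (B : ι → Finset V)
    (hfern : IsFern G col α (d + 1) T B) (hheight : h ≤ T.height) :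
    ∃ (P : Fin h → V) (B' : Fin h → Fin d → Finset V),
      IsJuniorCat G col α h d P B' := by
  obtain ⟨hdeg, hbud, ⟨cF, hcFinj, hcFsub⟩, hanti, hpar⟩ := hfern
  obtain ⟨v, -, hv⟩ := (Finset.le_sup_iff (show (0:ℕ) < h by omega)).mp hheight
  have hv' : h ≤ T.depth v := hv
  set s : ℕ → ι := fun k => T.parent^[T.depth v - k] v with hsdef
  have hdepth : ∀ k, k ≤ h → T.depth (s k) = k := by
    intro k hk
    show T.depth (T.parent^[T.depth v - k] v) = k
    rw [T.depth_iterate v (by omega)]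
    omega
  have hroot0 : T.depth T.root = 0 := (T.depth_eq_zero_iff T.root).mpr rfl
  have hs0 : s 0 = T.root := by
    show T.parent^[T.depth v - 0] v = T.root
    simpa using T.iterate_depth v
  have hsroot : ∀ k, 1 ≤ k → k ≤ h → s k ≠ T.root := by
    intro k h1 h2 heq
    have := hdepth k h2
    rw [heq, hroot0] at this
    omega
  have hsparent : ∀ k, k + 1 ≤ h → T.parent (s (k + 1)) = s k := by
    intro k hk
    show T.parent (T.parent^[T.depth v - (k+1)] v) = T.parent^[T.depth v - k] v
    rw [show T.depth v - k = (T.depth v - (k+1)) + 1 by omega, Function.iterate_succ_apply']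
  have hsinj : ∀ k m, k ≤ h → m ≤ h → s k = s m → k = m := by
    intro k m hk hm heq
    have h1 := hdepth k hk
    rw [heq, hdepth m hm] at h1
    omega
  have hsparent' : ∀ a, a ≤ h → T.parent (s a) = s (a - 1) := by
    intro a ha
    cases a with
    | zero => show T.parent (s 0) = s 0; rw [hs0, T.parent_root]
    | succ a => exact hsparent a (by omega)
  have hchild : ∀ k, k + 1 ≤ h → s (k + 1) ∈ T.children (s k) := by
    intro k hk
    simp only [RootedTreeOn.children, Finset.mem_filter, Finset.mem_univ, true_and]
    exact ⟨hsroot (k+1) (by omega) hk, hsparent k hk⟩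
  have hcard : ∀ i : Fin h, ((T.children (s i)).erase (s (i + 1))).card = d := by
    intro i
    have hm := hchild i (by omega)
    rw [Finset.card_erase_of_mem hm, hdeg _ ⟨_, hm⟩]
    omega
  set nodeF : Fin h → Fin d → ι :=
    fun i j => ((Finset.equivFinOfCardEq (hcard i)).symm j).val with hnodeF
  have hnodemem : ∀ (i : Fin h) (j : Fin d), nodeF i j ∈ (T.children (s i)).erase (s (i + 1)) :=
    fun i j => ((Finset.equivFinOfCardEq (hcard i)).symm j).property
  have hnodej : ∀ (i : Fin h) (j j' : Fin d), nodeF i j = nodeF i j' → j = j' := by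
    intro i j j' hjj
    exact (Finset.equivFinOfCardEq (hcard i)).symm.injective (Subtype.ext hjj)
  have hnne : ∀ (i : Fin h) (j : Fin d), nodeF i j ≠ s (i + 1) := fun i j => (Finset.mem_erase.mp (hnodemem i j)).1
  have hnch : ∀ (i : Fin h) (j : Fin d), nodeF i j ∈ T.children (s i) := fun i j => (Finset.mem_erase.mp (hnodemem i j)).2
  have hnroot : ∀ i j, nodeF i j ≠ T.root := by
    intro i j
    have := hnch i j
    simp only [RootedTreeOn.children, Finset.mem_filter, Finset.mem_univ, true_and] at this
    exact this.1
  have hnparent : ∀ i j, T.parent (nodeF i j) = s i := by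
    intro i j
    have := hnch i j
    simp only [RootedTreeOn.children, Finset.mem_filter, Finset.mem_univ, true_and] at this
    exact this.2
  have hndepth : ∀ i j, T.depth (nodeF i j) = i + 1 := by
    intro i j
    have h1 := T.depth_parent (nodeF i j) (hnroot i j)
    rw [hnparent i j, hdepth i (le_of_lt i.isLt)] at h1
    have h0 : T.depth (nodeF i j) ≠ 0 := fun hz => hnroot i j ((T.depth_eq_zero_iff _).mp hz)
    omega
  have hns : ∀ (i : Fin h) (j : Fin d) (k : ℕ), k ≤ h → nodeF i j ≠ s k := by
    intro i j k hk heq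
    have h1 := hndepth i j
    rw [heq, hdepth k hk] at h1
    apply hnne i j
    rw [heq, h1]
  have hninj : ∀ (i : Fin h) (j : Fin d) (i' : Fin h) (j' : Fin d),
      nodeF i j = nodeF i' j' → i = i' ∧ j = j' := by
    intro i j i' j' heq
    have hii : i = i' := by
      have h1 := hndepth i j
      have h2 := hndepth i' j'
      rw [heq, h2] at h1
      exact Fin.ext (by omega)
    subst hii
    exact ⟨rfl, hnodej i _ _ heq⟩
  have hantiSS : ∀ k m, k ≤ h → m ≤ h → k ≠ m → k + 1 ≠ m → m + 1 ≠ k →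
      Anti G (B (s k)) (B (s m)) := by
    intro k m hk hm h1 h2 h3
    apply hanti _ _ (fun he => h1 (hsinj k m hk hm he))
    · rw [hsparent' m hm]
      intro heq
      have := hsinj _ _ (by omega) hk heq
      omega
    · rw [hsparent' k hk]
      intro heq
      have := hsinj _ _ (by omega) hm heq
      omega
  have hantiSN : ∀ (k : ℕ) (i : Fin h) (j : Fin d), k ≤ h → k ≠ (i : ℕ) →
      Anti G (B (s k)) (B (nodeF i j)) := by
    intro k i j hk hki
    apply hanti _ _ (fun he => hns i j k hk he.symm)
    · rw [hnparent i j]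
      intro heq
      exact hki (hsinj _ _ (le_of_lt i.isLt) hk heq).symm
    · rw [hsparent' k hk]
      exact (hns i j (k - 1) (by omega)).symm
  have hantiNN : ∀ (i : Fin h) (j : Fin d) (i' : Fin h) (j' : Fin d),
      ¬(i = i' ∧ j = j') → Anti G (B (nodeF i j)) (B (nodeF i' j')) := by
    intro i j i' j' hne
    apply hanti _ _ (fun he => hne (hninj _ _ _ _ he))
    · rw [hnparent i' j']
      exact (hns i j (i' : ℕ) (le_of_lt i'.isLt)).symm
    · rw [hnparent i j]
      exact (hns i' j' (i : ℕ) (le_of_lt i.isLt)).symm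
  have hBne : ∀ t, (B t).Nonempty := by
    intro t
    obtain ⟨⟨x, hx⟩⟩ := (hbud t).1.nonempty
    exact ⟨x, hx⟩
  have hpath : ∀ n, n < h → ∃ x : ℕ → V, (∀ i ≤ n, x i ∈ B (s i)) ∧
      ∀ i < n, G.Adj (x i) (x (i + 1)) := by
    intro n
    induction n with
    | zero =>
      intro _
      obtain ⟨w, hw⟩ := hBne (s 0)
      refine ⟨fun _ => w, ?_, ?_⟩
      · intro i hi
        obtain rfl : i = 0 := by omega
        exact hw
      · intro i hi
        omega
    | succ n ih =>
      intro hlt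
      obtain ⟨x, hx1, hx2⟩ := ih (by omega)
      have hr : s (n + 1) ≠ T.root := hsroot (n + 1) (by omega) (by omega)
      have hxm : x n ∈ B (T.parent (s (n + 1))) := by
        rw [hsparent n (by omega)]
        exact hx1 n le_rfl
      obtain ⟨w, hw, hadj⟩ := hpar (s (n + 1)) hr (x n) hxm
      refine ⟨Function.update x (n + 1) w, ?_, ?_⟩
      · intro i hi
        rcases Nat.lt_or_ge i (n + 1) with h' | h'
        · rw [Function.update_of_ne (by omega)]
          exact hx1 i (by omega)
        · obtain rfl : i = n + 1 := by omega
          rw [Function.update_self]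
          exact hw
      · intro i hi
        rcases Nat.lt_or_ge i n with h' | h'
        · rw [Function.update_of_ne (by omega), Function.update_of_ne (by omega)]
          exact hx2 i h'
        · obtain rfl : i = n := by omega
          rw [Function.update_of_ne (by omega), Function.update_self]
          exact hadj
  obtain ⟨X, hX1, hX2⟩ := hpath (h - 1) (by omega)
  have hXmem : ∀ i : Fin h, X i ∈ B (s i) := fun i => hX1 i (by have := i.isLt; omega)
  have hXadj : ∀ i : ℕ, i + 1 < h → G.Adj (X i) (X (i + 1)) := fun i hi => hX2 i (by omega)
  have hcol : ∀ t w, w ∈ B t → col w = cF t := by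
    intro t w hw
    have := hcFsub t hw
    simpa [colClass] using this
  have hdisjBB : ∀ a b, a ≠ b → ∀ w, w ∈ B a → w ∉ B b := by
    intro a b hab w hwa hwb
    exact hab (hcFinj ((hcol a w hwa).symm.trans (hcol b w hwb)))
  refine ⟨fun i => X i, fun i j => B (nodeF i j), ?_, ?_, ?_, ?_, ?_⟩
  · constructor
    · intro i j hij
      by_contra hne
      have hsne : s (i : ℕ) ≠ s (j : ℕ) :=
        fun he => hne (Fin.ext (hsinj _ _ (le_of_lt i.isLt) (le_of_lt j.isLt) he))
      have hij' : X (i : ℕ) = X (j : ℕ) := hij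
      have hb := hXmem j
      rw [← hij'] at hb
      exact hdisjBB _ _ hsne _ (hXmem i) hb
    · intro i j
      constructor
      · intro hadj
        by_contra hcon
        push_neg at hcon
        obtain ⟨h1, h2⟩ := hcon
        rcases eq_or_ne (i : ℕ) (j : ℕ) with he | hne
        · rw [show i = j from Fin.ext he] at hadj
          exact G.irrefl hadj
        · exact hantiSS i j (le_of_lt i.isLt) (le_of_lt j.isLt) hne h1 h2 _ (hXmem i) _
            (hXmem j) hadj
      · intro hcon
        rcases hcon with h1 | h1
        · have h2 : (i : ℕ) + 1 < h := by have := j.isLt; omega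
          have := hXadj i h2
          rw [h1] at this
          exact this
        · have h2 : (j : ℕ) + 1 < h := by have := i.isLt; omega
          have := hXadj j h2
          rw [h1] at this
          exact this.symm
  · intro i j
    exact hbud (nodeF i j)
  · intro p q hpq
    exact hantiNN p.1 p.2 q.1 q.2 (fun ⟨h1, h2⟩ => hpq (Prod.ext h1 h2))
  · refine ⟨Sum.elim (fun i => cF (s i)) (fun p => cF (nodeF p.1 p.2)), ?_, ?_, ?_⟩
    · intro a b hab
      cases a with
      | inl i =>
        cases b with
        | inl i' =>
          simp only [Sum.elim_inl] at hab
          exact congrArg Sum.inl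
            (Fin.ext (hsinj _ _ (le_of_lt i.isLt) (le_of_lt i'.isLt) (hcFinj hab)))
        | inr p =>
          simp only [Sum.elim_inl, Sum.elim_inr] at hab
          exact absurd (hcFinj hab).symm (hns p.1 p.2 i (le_of_lt i.isLt))
      | inr p =>
        cases b with
        | inl i' =>
          simp only [Sum.elim_inl, Sum.elim_inr] at hab
          exact absurd (hcFinj hab) (hns p.1 p.2 i' (le_of_lt i'.isLt))
        | inr p' =>
          simp only [Sum.elim_inr] at hab
          obtain ⟨h1, h2⟩ := hninj _ _ _ _ (hcFinj hab)
          exact congrArg Sum.inr (Prod.ext h1 h2)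
    · intro i
      exact hcFsub (s i) (hXmem i)
    · intro i j
      exact hcFsub (nodeF i j)
  · intro i j
    ext w
    simp only [Finset.mem_inter, Nbr, Finset.mem_filter, Finset.mem_univ, true_and,
      Finset.mem_image, Finset.mem_singleton]
    constructor
    · rintro ⟨⟨a, ha, hadj⟩, k, -, rfl⟩
      rcases eq_or_ne k i with rfl | hne
      · rfl
      · exact absurd hadj
          (hantiSN k i j (le_of_lt k.isLt) (fun he => hne (Fin.ext he)) _ (hXmem k) a ha)
    · rintro rfl
      obtain ⟨a, ha, hadj⟩ := hpar (nodeF i j) (hnroot i j) (X i)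
        (by rw [hnparent i j]; exact hXmem i)
      exact ⟨⟨a, ha, hadj⟩, i, rfl⟩
end
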